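/- For any Dirichlet character χ, any real t, and any x ≥ 4, with σ₁ = 1/2 + 1/log x, one has |∑_{n<x²} Λ_x(n)χ(n) n^{-(σ₁+it)}| ≤ ∑_{n<x} Λ(n) n^{-1/2} + (1/log x)·∑_{x≤n≤x²} Λ(n)·log(x²/n)·n^{-1/2} = O(x/log x), with an absolute implied constant. -/

import Mathlib

open Complex Real ArithmeticFunction

/-- Selberg's truncated von Mangoldt function `Λ_x`. -/
noncomputable def Lambdax (x : ℝ) (n : ℕ) : ℝ :=
  if (n : ℝ) ≤ x then vonMangoldt n
  else if (n : ℝ) ≤ x ^ 2 then vonMangoldt n * (Real.log (x ^ 2 / n) / Real.log x)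
  else 0

/-- The Dirichlet polynomial `∑_{n<x²} Λ_x(n) χ(n) n^{-s}`. -/
noncomputable def Dpoly {q : ℕ} (χ : DirichletCharacter ℂ q) (x : ℝ) (s : ℂ) : ℂ :=
  ∑ n ∈ Finset.filter (fun n : ℕ => (n : ℝ) < x ^ 2) (Finset.range (⌈x ^ 2⌉₊ + 1)),
    (Lambdax x n : ℂ) * χ n / (n : ℂ) ^ s

private lemma log_le_four_mul_rpow {y : ℝ} (hy : 1 ≤ y) :
    Real.log y ≤ 4 * y ^ ((1:ℝ)/4) := by
  have h0 : (0:ℝ) < y := by linarith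
  have h1 : Real.log (y ^ ((1:ℝ)/4)) = (1/4) * Real.log y := Real.log_rpow h0 _
  have h2 : Real.log (y ^ ((1:ℝ)/4)) ≤ y ^ ((1:ℝ)/4) - 1 :=
    Real.log_le_sub_one_of_pos (Real.rpow_pos_of_pos h0 _)
  linarith

private lemma log_le_two_mul_sqrt {y : ℝ} (hy : 1 ≤ y) :
    Real.log y ≤ 2 * Real.sqrt y := by
  have h0 : (0:ℝ) < y := by linarith
  have h1 : Real.log (Real.sqrt y) = Real.log y / 2 := Real.log_sqrt h0.le
  have h2 : Real.log (Real.sqrt y) ≤ Real.sqrt y - 1 :=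
    Real.log_le_sub_one_of_pos (Real.sqrt_pos.2 h0)
  linarith

private lemma sum_inv_sqrt_le (M : ℕ) :
    ∑ n ∈ Finset.Icc 1 M, 1 / Real.sqrt n ≤ 2 * Real.sqrt M := by
  induction M with
  | zero => simp
  | succ m ih =>
    rw [Finset.sum_Icc_succ_top (Nat.le_add_left 1 m)]
    have ha : (0:ℝ) < Real.sqrt ((m:ℝ)+1) := Real.sqrt_pos.2 (by positivity)
    have h1 : Real.sqrt (m:ℝ) ^ 2 = (m:ℝ) := Real.sq_sqrt (Nat.cast_nonneg m)
    have h2 : Real.sqrt ((m:ℝ)+1) ^ 2 = (m:ℝ)+1 := Real.sq_sqrt (by positivity)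
    have hb : (0:ℝ) ≤ Real.sqrt (m:ℝ) := Real.sqrt_nonneg _
    have key : 1 / Real.sqrt ((m:ℝ)+1)
        ≤ 2 * Real.sqrt ((m:ℝ)+1) - 2 * Real.sqrt (m:ℝ) := by
      rw [div_le_iff₀ ha]
      nlinarith [sq_nonneg (Real.sqrt ((m:ℝ)+1) - Real.sqrt (m:ℝ))]
    push_cast
    linarith

private lemma sum_rpow_34_le (M : ℕ) :
    ∑ n ∈ Finset.Icc 1 M, ((n:ℝ)) ^ (-(3:ℝ)/4) ≤ 4 * (M:ℝ) ^ ((1:ℝ)/4) := by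
  induction M with
  | zero => simp
  | succ m ih =>
    rw [Finset.sum_Icc_succ_top (Nat.le_add_left 1 m)]
    have hm1 : (0:ℝ) < (m:ℝ)+1 := by positivity
    set a := ((m:ℝ)+1) ^ ((1:ℝ)/4) with hadef
    set b := ((m:ℝ)) ^ ((1:ℝ)/4) with hbdef
    have ha : 0 < a := Real.rpow_pos_of_pos hm1 _
    have hb : 0 ≤ b := Real.rpow_nonneg (Nat.cast_nonneg m) _
    have ha4 : a ^ (4:ℕ) = (m:ℝ)+1 := by
      rw [hadef, ← Real.rpow_natCast (((m:ℝ)+1) ^ ((1:ℝ)/4)) 4, ← Real.rpow_mul hm1.le]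
      norm_num
    have hb4 : b ^ (4:ℕ) = (m:ℝ) := by
      rw [hbdef, ← Real.rpow_natCast (((m:ℝ)) ^ ((1:ℝ)/4)) 4,
        ← Real.rpow_mul (Nat.cast_nonneg m)]
      norm_num
    have hba : b ≤ a := Real.rpow_le_rpow (Nat.cast_nonneg m) (by linarith) (by norm_num)
    have hkey : ((m:ℝ)+1) ^ (-(3:ℝ)/4) ≤ 4 * a - 4 * b := by
      have h3 : ((m:ℝ)+1) ^ (-(3:ℝ)/4) * a ^ (3:ℕ) = 1 := by
        rw [hadef, ← Real.rpow_natCast (((m:ℝ)+1) ^ ((1:ℝ)/4)) 3, ← Real.rpow_mul hm1.le,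
          ← Real.rpow_add hm1]
        norm_num
      have ha3 : (0:ℝ) < a ^ (3:ℕ) := by positivity
      have hr : ((m:ℝ)+1) ^ (-(3:ℝ)/4) = 1 / a ^ (3:ℕ) := by
        field_simp at h3 ⊢
        linarith [h3]
      rw [hr, div_le_iff₀ ha3]
      nlinarith [mul_nonneg (sub_nonneg.2 hba) (mul_nonneg (mul_nonneg hb hb) hb),
        mul_nonneg (sub_nonneg.2 hba) (mul_nonneg (mul_nonneg hb hb) ha.le),
        mul_nonneg (sub_nonneg.2 hba) (mul_nonneg (mul_nonneg hb ha.le) ha.le),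
        mul_nonneg (sub_nonneg.2 hba) (mul_nonneg (mul_nonneg ha.le ha.le) ha.le)]
    push_cast
    linarith

private lemma theta_le (M : ℕ) :
    ∑ p ∈ (Finset.range (M+1)).filter Nat.Prime, Real.log p ≤ M * Real.log 4 := by
  have h1 : ∑ p ∈ (Finset.range (M+1)).filter Nat.Prime, Real.log p
      = Real.log ((primorial M : ℕ) : ℝ) := by
    rw [primorial, Nat.cast_prod, Real.log_prod]
    intro p hp
    have hp2 := (Finset.mem_filter.1 hp).2.pos
    positivity
  rw [h1]
  calc Real.log ((primorial M : ℕ) : ℝ) ≤ Real.log (((4:ℕ) ^ M : ℕ) : ℝ) := by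
        apply Real.log_le_log (by exact_mod_cast primorial_pos M)
        exact_mod_cast primorial_le_4_pow M
    _ = M * Real.log 4 := by
        push_cast
        rw [Real.log_pow]

private lemma psi_le (M : ℕ) :
    ∑ n ∈ Finset.Icc 1 M, (vonMangoldt n : ℝ) ≤ 40 * M := by
  rcases Nat.eq_zero_or_pos M with rfl | hM
  · simp
  have hM1 : (1:ℝ) ≤ (M:ℝ) := by exact_mod_cast hM
  have hlogM : (0:ℝ) ≤ Real.log M := Real.log_nonneg hM1
  classical
  rw [← Finset.sum_filter_add_sum_filter_not (Finset.Icc 1 M) Nat.Prime]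
  have hprime : ∑ n ∈ (Finset.Icc 1 M).filter Nat.Prime, (vonMangoldt n : ℝ)
      ≤ M * Real.log 4 := by
    have hset : (Finset.Icc 1 M).filter Nat.Prime
        = (Finset.range (M+1)).filter Nat.Prime := by
      ext n
      simp only [Finset.mem_filter, Finset.mem_Icc, Finset.mem_range, Nat.lt_succ_iff]
      exact ⟨fun h => ⟨h.1.2, h.2⟩, fun h => ⟨⟨h.2.one_lt.le, h.1⟩, h.2⟩⟩
    rw [hset]
    calc ∑ n ∈ (Finset.range (M+1)).filter Nat.Prime, (vonMangoldt n : ℝ)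
        = ∑ n ∈ (Finset.range (M+1)).filter Nat.Prime, Real.log n :=
          Finset.sum_congr rfl fun n hn =>
            vonMangoldt_apply_prime (Finset.mem_filter.1 hn).2
      _ ≤ M * Real.log 4 := theta_le M
  set S := (Finset.Icc 1 M).filter (fun n => ¬ n.Prime ∧ IsPrimePow n) with hSdef
  have hrw : ∑ n ∈ (Finset.Icc 1 M).filter (fun n => ¬ Nat.Prime n), (vonMangoldt n : ℝ)
      = ∑ n ∈ S, (vonMangoldt n : ℝ) := by
    apply (Finset.sum_subset ?_ ?_).symm
    · intro n hn
      simp only [hSdef, Finset.mem_filter] at hn ⊢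
      exact ⟨hn.1, hn.2.1⟩
    · intro n hn hns
      simp only [hSdef, Finset.mem_filter] at hn hns
      have : ¬ IsPrimePow n := fun h => hns ⟨hn.1, hn.2, h⟩
      by_contra hne
      exact this (vonMangoldt_ne_zero_iff.1 hne)
  have hcard : S.card ≤ (Nat.sqrt M) * (Nat.log 2 M) := by
    have hsub : S ⊆ Finset.image (fun pk : ℕ × ℕ => pk.1 ^ pk.2)
        ((Finset.Icc 2 (Nat.sqrt M)) ×ˢ (Finset.Icc 2 (Nat.log 2 M))) := by
      intro n hn
      simp only [hSdef, Finset.mem_filter, Finset.mem_Icc] at hn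
      obtain ⟨⟨hn1, hnM⟩, hnp, hpp⟩ := hn
      obtain ⟨p, k, hp, hk, rfl⟩ := (isPrimePow_nat_iff _).1 hpp
      have hk2 : 2 ≤ k := by
        have : k ≠ 1 := by
          intro h
          rw [h, pow_one] at hnp
          exact hnp hp
        omega
      have hpM : p ≤ Nat.sqrt M := by
        apply Nat.le_sqrt.2
        calc p * p = p ^ 2 := (sq p).symm
          _ ≤ p ^ k := Nat.pow_le_pow_right hp.one_lt.le hk2
          _ ≤ M := hnM
      have hM0 : M ≠ 0 := hM.ne'
      have hkM : k ≤ Nat.log 2 M := (Nat.le_log_iff_pow_le one_lt_two hM0).2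
        (le_trans (Nat.pow_le_pow_left hp.two_le k) hnM)
      exact Finset.mem_image.2 ⟨(p, k), Finset.mem_product.2
        ⟨Finset.mem_Icc.2 ⟨hp.two_le, hpM⟩, Finset.mem_Icc.2 ⟨hk2, hkM⟩⟩, rfl⟩
    calc S.card ≤ _ := Finset.card_le_card hsub
      _ ≤ ((Finset.Icc 2 (Nat.sqrt M)) ×ˢ (Finset.Icc 2 (Nat.log 2 M))).card :=
          Finset.card_image_le
      _ ≤ Nat.sqrt M * Nat.log 2 M := by
          rw [Finset.card_product, Nat.card_Icc, Nat.card_Icc]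
          exact Nat.mul_le_mul (by omega) (by omega)
  have hSsum : ∑ n ∈ S, (vonMangoldt n : ℝ) ≤ (S.card : ℝ) * Real.log M := by
    have := Finset.sum_le_card_nsmul S (fun n => (vonMangoldt n : ℝ)) (Real.log M) ?_
    · simpa [nsmul_eq_mul] using this
    · intro n hn
      simp only [hSdef, Finset.mem_filter, Finset.mem_Icc] at hn
      calc (vonMangoldt n : ℝ) ≤ Real.log n := vonMangoldt_le_log
        _ ≤ Real.log M := Real.log_le_log (by exact_mod_cast hn.1.1) (by exact_mod_cast hn.1.2)
  -- now real estimates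
  have hsqrt : ((Nat.sqrt M : ℕ) : ℝ) ≤ Real.sqrt M := by
    have h1 : ((Nat.sqrt M : ℕ) : ℝ) ^ 2 ≤ (M : ℝ) := by
      rw [sq]
      exact_mod_cast Nat.sqrt_le M
    calc ((Nat.sqrt M : ℕ) : ℝ) = Real.sqrt (((Nat.sqrt M : ℕ) : ℝ) ^ 2) :=
          (Real.sqrt_sq (Nat.cast_nonneg _)).symm
      _ ≤ Real.sqrt M := Real.sqrt_le_sqrt h1
  have hlog2 : ((Nat.log 2 M : ℕ) : ℝ) ≤ 2 * Real.log M := by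
    have h1 : ((2:ℕ) ^ (Nat.log 2 M) : ℕ) ≤ M := Nat.pow_log_le_self 2 hM.ne'
    have h2 : ((Nat.log 2 M : ℕ) : ℝ) * Real.log 2 ≤ Real.log M := by
      rw [← Real.log_pow]
      exact Real.log_le_log (by positivity) (by exact_mod_cast h1)
    have h3 : (0.6931471803 : ℝ) < Real.log 2 := Real.log_two_gt_d9
    nlinarith [(by positivity : (0:ℝ) ≤ ((Nat.log 2 M : ℕ) : ℝ))]
  have hlogsq : Real.log M * Real.log M ≤ 16 * Real.sqrt M := by
    have h1 : Real.log M ≤ 4 * (M:ℝ) ^ ((1:ℝ)/4) := log_le_four_mul_rpow hM1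
    have h2 : ((M:ℝ) ^ ((1:ℝ)/4)) ^ (2:ℕ) = Real.sqrt M := by
      rw [← Real.rpow_natCast ((M:ℝ) ^ ((1:ℝ)/4)) 2, ← Real.rpow_mul (by positivity)]
      rw [Real.sqrt_eq_rpow]
      norm_num
    nlinarith [Real.rpow_nonneg (show (0:ℝ) ≤ (M:ℝ) by positivity) ((1:ℝ)/4)]
  have hsq : Real.sqrt M * Real.sqrt M = (M:ℝ) := Real.mul_self_sqrt (Nat.cast_nonneg M)
  have hlog4 : Real.log 4 ≤ 3 := by
    have := Real.log_le_sub_one_of_pos (show (0:ℝ) < 4 by norm_num)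
    linarith
  have hsqrtnn : (0:ℝ) ≤ Real.sqrt M := Real.sqrt_nonneg _
  have hSfinal : ∑ n ∈ S, (vonMangoldt n : ℝ) ≤ 32 * M := by
    have hc : (S.card : ℝ) ≤ Real.sqrt M * (2 * Real.log M) := by
      have : (S.card : ℝ) ≤ ((Nat.sqrt M : ℕ) : ℝ) * ((Nat.log 2 M : ℕ) : ℝ) := by
        exact_mod_cast hcard
      nlinarith [(by positivity : (0:ℝ) ≤ ((Nat.sqrt M : ℕ) : ℝ)), (by positivity : (0:ℝ) ≤ ((Nat.log 2 M : ℕ) : ℝ))]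
    calc ∑ n ∈ S, (vonMangoldt n : ℝ) ≤ (S.card : ℝ) * Real.log M := hSsum
      _ ≤ (Real.sqrt M * (2 * Real.log M)) * Real.log M := by
          apply mul_le_mul_of_nonneg_right hc hlogM
      _ = 2 * Real.sqrt M * (Real.log M * Real.log M) := by ring
      _ ≤ 2 * Real.sqrt M * (16 * Real.sqrt M) := by
          apply mul_le_mul_of_nonneg_left hlogsq (by positivity)
      _ = 32 * (Real.sqrt M * Real.sqrt M) := by ring
      _ = 32 * M := by rw [hsq]
  rw [hrw]
  have hMnn : (0:ℝ) ≤ (M:ℝ) := Nat.cast_nonneg M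
  nlinarith

private lemma weighted_sum_le {a f : ℕ → ℝ} {C : ℝ} (ha : ∀ n, 0 ≤ a n)
    (hA : ∀ N : ℕ, ∑ n ∈ Finset.Icc 1 N, a n ≤ C * N)
    (M : ℕ) (hf0 : ∀ n, 1 ≤ n → n ≤ M → 0 ≤ f n)
    (hfa : ∀ n, 1 ≤ n → n + 1 ≤ M → f (n+1) ≤ f n) :
    ∑ n ∈ Finset.Icc 1 M, a n * f n ≤ C * ∑ n ∈ Finset.Icc 1 M, f n := by
  rcases Nat.eq_zero_or_pos M with rfl | hM
  · simp
  have key : ∀ m : ℕ, 1 ≤ m → m ≤ M →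
      ∑ n ∈ Finset.Icc 1 m, a n * f n
        ≤ C * ∑ n ∈ Finset.Icc 1 m, f n
          - (C * m - ∑ n ∈ Finset.Icc 1 m, a n) * f m := by
    intro m hm1
    induction m, hm1 using Nat.le_induction with
    | base =>
      intro _
      simp only [Finset.Icc_self, Finset.sum_singleton]
      have : C * f 1 - (C * (1:ℕ) - a 1) * f 1 = a 1 * f 1 := by push_cast; ring
      rw [this]
    | succ m hm ih =>
      intro hmM
      have hmM' : m ≤ M := le_trans (Nat.le_succ m) hmM
      have h1 := ih (le_trans (Nat.le_succ m) hmM)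
      rw [Finset.sum_Icc_succ_top (Nat.le_add_left 1 m),
        Finset.sum_Icc_succ_top (Nat.le_add_left 1 m),
        Finset.sum_Icc_succ_top (Nat.le_add_left 1 m)]
      have h2 : f (m+1) ≤ f m := hfa m hm hmM
      have h3 : (0:ℝ) ≤ C * m - ∑ n ∈ Finset.Icc 1 m, a n := by
        linarith [hA m]
      have h4 : (0:ℝ) ≤ a (m+1) := ha (m+1)
      push_cast
      nlinarith [mul_le_mul_of_nonneg_left h2 h3]
  have hfin := key M hM le_rfl
  have h5 : (0:ℝ) ≤ C * M - ∑ n ∈ Finset.Icc 1 M, a n := by linarith [hA M]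
  have h6 : (0:ℝ) ≤ f M := hf0 M hM le_rfl
  nlinarith [mul_nonneg h5 h6]

theorem Dpoly_bound :
    ∃ C : ℝ, 0 < C ∧
      ∀ (q : ℕ) (χ : DirichletCharacter ℂ q) (t : ℝ) (x : ℝ), 4 ≤ x →
        ‖Dpoly χ x ((1 / 2 + 1 / Real.log x : ℝ) + t * Complex.I)‖
            ≤ (∑ n ∈ Finset.filter (fun n : ℕ => (n : ℝ) < x) (Finset.range (⌈x⌉₊ + 1)),
                vonMangoldt n / Real.sqrt n)
              + (1 / Real.log x) *
                ∑ n ∈ Finset.filter (fun n : ℕ => x ≤ (n : ℝ) ∧ (n : ℝ) ≤ x ^ 2)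
                    (Finset.range (⌈x ^ 2⌉₊ + 1)),
                  vonMangoldt n * Real.log (x ^ 2 / n) / Real.sqrt n
          ∧ (∑ n ∈ Finset.filter (fun n : ℕ => (n : ℝ) < x) (Finset.range (⌈x⌉₊ + 1)),
                vonMangoldt n / Real.sqrt n)
              + (1 / Real.log x) *
                ∑ n ∈ Finset.filter (fun n : ℕ => x ≤ (n : ℝ) ∧ (n : ℝ) ≤ x ^ 2)
                    (Finset.range (⌈x ^ 2⌉₊ + 1)),
                  vonMangoldt n * Real.log (x ^ 2 / n) / Real.sqrt n
            ≤ C * (x / Real.log x) := by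
  refine ⟨800, by norm_num, fun q χ t x hx => ?_⟩
  have hx0 : (0:ℝ) < x := by linarith
  have hx1 : (1:ℝ) < x := by linarith
  have hL : 0 < Real.log x := Real.log_pos hx1
  have hxx : x ≤ x ^ 2 := by nlinarith
  have hx20 : (0:ℝ) < x ^ 2 := by positivity
  have hΛx : ∀ n : ℕ, 0 ≤ Lambdax x n := by
    intro n
    unfold Lambdax
    split_ifs with h1 h2
    · exact vonMangoldt_nonneg
    · apply mul_nonneg vonMangoldt_nonneg
      apply div_nonneg _ hL.le
      apply Real.log_nonneg
      have hn0 : (0:ℝ) < (n:ℝ) := by linarith [not_le.1 h1]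
      rw [le_div_iff₀ hn0]
      linarith
    · exact le_rfl
  constructor
  · -- part 1 : triangle inequality
    rw [Dpoly]
    refine le_trans (norm_sum_le _ _) ?_
    have hterm : ∀ n ∈ (Finset.range (⌈x^2⌉₊+1)).filter (fun n : ℕ => (n:ℝ) < x^2),
        ‖(Lambdax x n : ℂ) * χ n / (n:ℂ) ^ (((1/2 + 1/Real.log x : ℝ):ℂ) + (t:ℂ) * Complex.I)‖
          ≤ Lambdax x n / Real.sqrt n := by
      intro n _
      rcases Nat.eq_zero_or_pos n with rfl | hn0
      · have h0 : Lambdax x 0 = 0 := by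
          unfold Lambdax
          rw [if_pos (by push_cast; linarith : ((0:ℕ):ℝ) ≤ x)]
          simp
        rw [h0]
        simp
      · have hn1 : (1:ℝ) ≤ (n:ℝ) := by exact_mod_cast hn0
        have hsq : (0:ℝ) < Real.sqrt (n:ℝ) := Real.sqrt_pos.2 (by linarith)
        have hre : ((((1/2 + 1/Real.log x : ℝ)):ℂ) + (t:ℂ) * Complex.I).re
            = 1/2 + 1/Real.log x := by simp
        rw [norm_div, norm_mul, Complex.norm_real, Real.norm_eq_abs, _root_.abs_of_nonneg (hΛx n),
          Complex.norm_natCast_cpow_of_pos hn0, hre]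
        have hs : Real.sqrt (n:ℝ) ≤ (n:ℝ) ^ ((1:ℝ)/2 + 1/Real.log x) := by
          rw [Real.sqrt_eq_rpow]
          apply Real.rpow_le_rpow_of_exponent_le hn1
          have h1L : 0 < 1/Real.log x := by positivity
          linarith
        refine div_le_div₀ (hΛx n) ?_ hsq hs
        calc Lambdax x n * ‖χ n‖ ≤ Lambdax x n * 1 :=
              mul_le_mul_of_nonneg_left (DirichletCharacter.norm_le_one χ _) (hΛx n)
          _ = Lambdax x n := mul_one _
    refine le_trans (Finset.sum_le_sum hterm) ?_
    rw [← Finset.sum_filter_add_sum_filter_not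
      ((Finset.range (⌈x^2⌉₊+1)).filter (fun n : ℕ => (n:ℝ) < x^2))
      (fun n : ℕ => (n:ℝ) < x)]
    apply add_le_add
    · -- the n < x part
      apply le_of_eq
      apply Finset.sum_congr
      · ext n
        simp only [Finset.mem_filter, Finset.mem_range]
        constructor
        · rintro ⟨⟨-, -⟩, h3⟩
          exact ⟨Nat.lt_succ_of_lt (Nat.lt_ceil.2 h3), h3⟩
        · rintro ⟨-, h2⟩
          have hx2n : (n:ℝ) < x^2 := lt_of_lt_of_le h2 hxx
          exact ⟨⟨Nat.lt_succ_of_lt (Nat.lt_ceil.2 hx2n), hx2n⟩, h2⟩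
      · intro n hn
        simp only [Finset.mem_filter] at hn
        unfold Lambdax
        rw [if_pos hn.2.le]
    · -- the x ≤ n part
      have hsxne : Real.sqrt x ≠ 0 := ne_of_gt (Real.sqrt_pos.2 hx0)
      have hstep : ∀ n ∈ ((Finset.range (⌈x^2⌉₊+1)).filter
            (fun n : ℕ => (n:ℝ) < x^2)).filter (fun n : ℕ => ¬ (n:ℝ) < x),
          Lambdax x n / Real.sqrt n
            ≤ (vonMangoldt n * Real.log (x^2/n) / Real.sqrt n) / Real.log x := by
        intro n hn
        simp only [Finset.mem_filter, Finset.mem_range, not_lt] at hn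
        obtain ⟨⟨-, hnx2⟩, hxn⟩ := hn
        have hn0 : (0:ℝ) < n := by linarith
        have hs0 : (0:ℝ) < Real.sqrt (n:ℝ) := Real.sqrt_pos.2 hn0
        rcases le_or_gt (n:ℝ) x with hle | hlt
        · have hnx : (n:ℝ) = x := le_antisymm hle hxn
          unfold Lambdax
          rw [if_pos hle, hnx]
          have hxd : x^2/x = x := by
            rw [sq, mul_div_assoc, div_self hx0.ne', mul_one]
          rw [hxd]
          apply le_of_eq
          field_simp
        · unfold Lambdax
          rw [if_neg (not_le.2 hlt), if_pos hnx2.le]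
          apply le_of_eq
          ring
      refine le_trans (Finset.sum_le_sum hstep) ?_
      have hsub2 : Finset.filter (fun n : ℕ => ¬ (n:ℝ) < x)
            (Finset.filter (fun n : ℕ => (n:ℝ) < x^2) (Finset.range (⌈x^2⌉₊+1)))
          ⊆ Finset.filter (fun n : ℕ => x ≤ (n:ℝ) ∧ (n:ℝ) ≤ x^2)
            (Finset.range (⌈x^2⌉₊+1)) := by
        intro n hn
        simp only [Finset.mem_filter, Finset.mem_range, not_lt] at hn ⊢
        exact ⟨hn.1.1, hn.2, hn.1.2.le⟩
      have hnn : ∀ n ∈ Finset.filter (fun n : ℕ => x ≤ (n:ℝ) ∧ (n:ℝ) ≤ x^2)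
            (Finset.range (⌈x^2⌉₊+1)),
          n ∉ Finset.filter (fun n : ℕ => ¬ (n:ℝ) < x)
            (Finset.filter (fun n : ℕ => (n:ℝ) < x^2) (Finset.range (⌈x^2⌉₊+1))) →
          (0:ℝ) ≤ vonMangoldt n * Real.log (x^2/n) / Real.sqrt n / Real.log x := by
        intro n hn _
        simp only [Finset.mem_filter, Finset.mem_range] at hn
        have hn0 : (0:ℝ) < n := by linarith [hn.2.1]
        have hlg : (0:ℝ) ≤ Real.log (x^2/n) :=
          Real.log_nonneg (by rw [le_div_iff₀ hn0]; linarith [hn.2.2])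
        exact div_nonneg (div_nonneg (mul_nonneg vonMangoldt_nonneg hlg)
          (Real.sqrt_nonneg _)) hL.le
      refine le_trans (Finset.sum_le_sum_of_subset_of_nonneg hsub2 hnn) (le_of_eq ?_)
      rw [← Finset.sum_div]
      ring
  · -- part 2 : Chebyshev-type bound
    have hsqrtx_pos : 0 < Real.sqrt x := Real.sqrt_pos.2 hx0
    have hsqx : Real.sqrt x * Real.sqrt x = x := Real.mul_self_sqrt hx0.le
    have hsqrtx_le : Real.sqrt x ≤ 2 * (x / Real.log x) := by
      rw [show (2:ℝ) * (x / Real.log x) = 2 * x / Real.log x by ring, le_div_iff₀ hL]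
      have h := log_le_two_mul_sqrt hx1.le
      nlinarith
    have hx214 : (x^2) ^ ((1:ℝ)/4) = Real.sqrt x := by
      rw [← Real.rpow_natCast x 2, ← Real.rpow_mul hx0.le, Real.sqrt_eq_rpow]
      norm_num
    -- bound for S1
    have hS1b : ∑ n ∈ Finset.filter (fun n : ℕ => (n : ℝ) < x) (Finset.range (⌈x⌉₊ + 1)),
        vonMangoldt n / Real.sqrt n ≤ 160 * (x / Real.log x) := by
      have e0 : (vonMangoldt (0:ℕ) : ℝ) / Real.sqrt ((0:ℕ):ℝ) = 0 := by simp
      have hstep : ∑ n ∈ Finset.filter (fun n : ℕ => (n : ℝ) < x) (Finset.range (⌈x⌉₊ + 1)),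
          vonMangoldt n / Real.sqrt n
            ≤ ∑ n ∈ Finset.Icc 1 ⌊x⌋₊, vonMangoldt n / Real.sqrt n := by
        rw [← Finset.sum_erase (f := fun n : ℕ => (vonMangoldt n : ℝ) / Real.sqrt n)
          (Finset.filter (fun n : ℕ => (n : ℝ) < x) (Finset.range (⌈x⌉₊ + 1))) e0]
        apply Finset.sum_le_sum_of_subset_of_nonneg
        · intro n hn
          simp only [Finset.mem_erase, Finset.mem_filter, Finset.mem_range] at hn
          exact Finset.mem_Icc.2 ⟨Nat.one_le_iff_ne_zero.2 hn.1, Nat.le_floor hn.2.2.le⟩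
        · intro n _ _
          exact div_nonneg vonMangoldt_nonneg (Real.sqrt_nonneg _)
      have hw := weighted_sum_le (a := fun n => (vonMangoldt n : ℝ))
        (f := fun n : ℕ => 1 / Real.sqrt n) (C := 40)
        (fun n => vonMangoldt_nonneg) (fun N => psi_le N) ⌊x⌋₊
        (fun n _ _ => by positivity)
        (fun n hn1 _ => by
          have hn0 : (0:ℝ) < Real.sqrt (n:ℝ) := Real.sqrt_pos.2 (by exact_mod_cast hn1)
          apply one_div_le_one_div_of_le hn0
          apply Real.sqrt_le_sqrt
          exact_mod_cast Nat.le_succ n)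
      have hsum := sum_inv_sqrt_le ⌊x⌋₊
      have hfl : ((⌊x⌋₊:ℕ) : ℝ) ≤ x := Nat.floor_le hx0.le
      have hsq2 : Real.sqrt ((⌊x⌋₊:ℕ):ℝ) ≤ Real.sqrt x := Real.sqrt_le_sqrt hfl
      calc ∑ n ∈ Finset.filter (fun n : ℕ => (n : ℝ) < x) (Finset.range (⌈x⌉₊ + 1)),
            vonMangoldt n / Real.sqrt n
          ≤ ∑ n ∈ Finset.Icc 1 ⌊x⌋₊, vonMangoldt n / Real.sqrt n := hstep
        _ = ∑ n ∈ Finset.Icc 1 ⌊x⌋₊, vonMangoldt n * (1 / Real.sqrt n) :=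
            Finset.sum_congr rfl (fun n _ => by rw [mul_one_div])
        _ ≤ 40 * ∑ n ∈ Finset.Icc 1 ⌊x⌋₊, 1 / Real.sqrt (n:ℝ) := hw
        _ ≤ 40 * (2 * Real.sqrt ((⌊x⌋₊:ℕ):ℝ)) := by linarith
        _ ≤ 80 * Real.sqrt x := by linarith
        _ ≤ 160 * (x / Real.log x) := by linarith
    -- bound for S2
    have hS2b : ∑ n ∈ Finset.filter (fun n : ℕ => x ≤ (n : ℝ) ∧ (n : ℝ) ≤ x ^ 2)
          (Finset.range (⌈x ^ 2⌉₊ + 1)),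
        vonMangoldt n * Real.log (x ^ 2 / n) / Real.sqrt n ≤ 640 * x := by
      have hM2x : ((⌊x^2⌋₊:ℕ):ℝ) ≤ x^2 := Nat.floor_le hx20.le
      have hstep : ∑ n ∈ Finset.filter (fun n : ℕ => x ≤ (n : ℝ) ∧ (n : ℝ) ≤ x ^ 2)
            (Finset.range (⌈x ^ 2⌉₊ + 1)),
          vonMangoldt n * Real.log (x ^ 2 / n) / Real.sqrt n
            ≤ ∑ n ∈ Finset.Icc 1 ⌊x^2⌋₊,
                vonMangoldt n * (Real.log (x ^ 2 / n) / Real.sqrt n) := by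
        refine le_trans (le_of_eq (Finset.sum_congr rfl
          (fun n _ => mul_div_assoc _ _ _))) ?_
        apply Finset.sum_le_sum_of_subset_of_nonneg
        · intro n hn
          simp only [Finset.mem_filter, Finset.mem_range] at hn
          obtain ⟨-, hxn, hnx2⟩ := hn
          refine Finset.mem_Icc.2 ⟨?_, Nat.le_floor hnx2⟩
          have h1n : (1:ℝ) ≤ (n:ℝ) := by linarith
          exact_mod_cast h1n
        · intro n hn _
          have hn1 := (Finset.mem_Icc.1 hn).1
          have hn0 : (0:ℝ) < n := by exact_mod_cast hn1
          have hnM : (n:ℝ) ≤ x^2 := le_trans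
            (by exact_mod_cast (Finset.mem_Icc.1 hn).2) hM2x
          have hlg : (0:ℝ) ≤ Real.log (x^2/n) :=
            Real.log_nonneg (by rw [le_div_iff₀ hn0]; linarith)
          exact mul_nonneg vonMangoldt_nonneg
            (div_nonneg hlg (Real.sqrt_nonneg _))
      have hw2 := weighted_sum_le (a := fun n => (vonMangoldt n : ℝ))
        (f := fun n : ℕ => Real.log (x^2/n) / Real.sqrt n) (C := 40)
        (fun n => vonMangoldt_nonneg) (fun N => psi_le N) ⌊x^2⌋₊
        (fun n hn1 hnM => by
          have hn0 : (0:ℝ) < n := by exact_mod_cast hn1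
          have hnM' : (n:ℝ) ≤ x^2 := le_trans (by exact_mod_cast hnM) hM2x
          have hlg : (0:ℝ) ≤ Real.log (x^2/n) :=
            Real.log_nonneg (by rw [le_div_iff₀ hn0]; linarith)
          exact div_nonneg hlg (Real.sqrt_nonneg _))
        (fun n hn1 hnM => by
          have hn0 : (0:ℝ) < n := by exact_mod_cast hn1
          have hn10 : (0:ℝ) < ((n+1:ℕ):ℝ) := by positivity
          have hle : ((n+1:ℕ):ℝ) ≤ x^2 := le_trans (by exact_mod_cast hnM) hM2x
          refine div_le_div₀ (Real.log_nonneg ?_) ?_ (Real.sqrt_pos.2 hn0)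
            (Real.sqrt_le_sqrt ?_)
          · rw [le_div_iff₀ hn0]
            have : (n:ℝ) ≤ ((n+1:ℕ):ℝ) := by exact_mod_cast Nat.le_succ n
            linarith
          · apply Real.log_le_log (by positivity)
            apply div_le_div_of_nonneg_left hx20.le hn0
            exact_mod_cast Nat.le_succ n
          · exact_mod_cast Nat.le_succ n)
      have hterm : ∀ n ∈ Finset.Icc 1 ⌊x^2⌋₊,
          Real.log (x^2/n) / Real.sqrt n ≤ 4 * Real.sqrt x * (n:ℝ) ^ (-(3:ℝ)/4) := by
        intro n hn
        obtain ⟨hn1, hn2⟩ := Finset.mem_Icc.1 hn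
        have hn0 : (0:ℝ) < n := by exact_mod_cast hn1
        have hnM : (n:ℝ) ≤ x^2 := le_trans (by exact_mod_cast hn2) hM2x
        have hy1 : (1:ℝ) ≤ x^2/(n:ℝ) := by rw [le_div_iff₀ hn0]; linarith
        have hlog : Real.log (x^2/n) ≤ 4 * (x^2/(n:ℝ)) ^ ((1:ℝ)/4) :=
          log_le_four_mul_rpow hy1
        have heq : 4 * (x^2/(n:ℝ)) ^ ((1:ℝ)/4) / Real.sqrt n
            = 4 * Real.sqrt x * (n:ℝ) ^ (-(3:ℝ)/4) := by
          have e1 : (1:ℝ)/4 + 1/2 = 3/4 := by norm_num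
          have e2 : (-(3:ℝ)/4) = -((3:ℝ)/4) := by norm_num
          rw [Real.div_rpow hx20.le hn0.le, Real.sqrt_eq_rpow (n:ℝ), hx214,
            ← mul_div_assoc, div_div, ← Real.rpow_add hn0, e1, e2, Real.rpow_neg hn0.le]
          ring
        calc Real.log (x^2/n) / Real.sqrt n
            ≤ 4 * (x^2/(n:ℝ)) ^ ((1:ℝ)/4) / Real.sqrt n := by
              exact div_le_div₀ (by positivity) hlog (Real.sqrt_pos.2 hn0) le_rfl
          _ = 4 * Real.sqrt x * (n:ℝ) ^ (-(3:ℝ)/4) := heq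
      have hsumf : ∑ n ∈ Finset.Icc 1 ⌊x^2⌋₊, Real.log (x^2/n) / Real.sqrt n
          ≤ 16 * x := by
        calc ∑ n ∈ Finset.Icc 1 ⌊x^2⌋₊, Real.log (x^2/n) / Real.sqrt n
            ≤ ∑ n ∈ Finset.Icc 1 ⌊x^2⌋₊, 4 * Real.sqrt x * (n:ℝ) ^ (-(3:ℝ)/4) :=
              Finset.sum_le_sum hterm
          _ = 4 * Real.sqrt x * ∑ n ∈ Finset.Icc 1 ⌊x^2⌋₊, (n:ℝ) ^ (-(3:ℝ)/4) :=
              (Finset.mul_sum _ _ _).symm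
          _ ≤ 4 * Real.sqrt x * (4 * ((⌊x^2⌋₊:ℕ):ℝ) ^ ((1:ℝ)/4)) := by
              apply mul_le_mul_of_nonneg_left (sum_rpow_34_le ⌊x^2⌋₊) (by positivity)
          _ ≤ 4 * Real.sqrt x * (4 * (x^2) ^ ((1:ℝ)/4)) := by
              have h14 : ((⌊x^2⌋₊:ℕ):ℝ) ^ ((1:ℝ)/4) ≤ (x^2) ^ ((1:ℝ)/4) :=
                Real.rpow_le_rpow (Nat.cast_nonneg _) hM2x (by norm_num)
              nlinarith
          _ = 16 * x := by
              rw [hx214]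
              nlinarith [hsqx]
      calc ∑ n ∈ Finset.filter (fun n : ℕ => x ≤ (n : ℝ) ∧ (n : ℝ) ≤ x ^ 2)
            (Finset.range (⌈x ^ 2⌉₊ + 1)),
          vonMangoldt n * Real.log (x ^ 2 / n) / Real.sqrt n
          ≤ ∑ n ∈ Finset.Icc 1 ⌊x^2⌋₊,
              vonMangoldt n * (Real.log (x ^ 2 / n) / Real.sqrt n) := hstep
        _ ≤ 40 * ∑ n ∈ Finset.Icc 1 ⌊x^2⌋₊, Real.log (x^2/n) / Real.sqrt n := hw2
        _ ≤ 40 * (16 * x) := by linarith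
        _ = 640 * x := by ring
    have h1L : (0:ℝ) < 1 / Real.log x := by positivity
    have hfin : (1 / Real.log x) * (∑ n ∈ Finset.filter
          (fun n : ℕ => x ≤ (n : ℝ) ∧ (n : ℝ) ≤ x ^ 2) (Finset.range (⌈x ^ 2⌉₊ + 1)),
        vonMangoldt n * Real.log (x ^ 2 / n) / Real.sqrt n)
          ≤ (1 / Real.log x) * (640 * x) :=
      mul_le_mul_of_nonneg_left hS2b h1L.le
    have heq : (1 / Real.log x) * (640 * x) = 640 * (x / Real.log x) := by ring
    linarith
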